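/- Let B be a finite bipartite graph with parts S' and V, f : S' → ℤ≥2, and suppose F₀ is a forest subgraph of B with d_{F₀}(x') ≥ f(x')+1 for all x' ∈ S'. Suppose further there is an injection u ↦ u' from a set S ⊆ V to S' such that every 'vertical' pair u'u is an edge of B. Then there exists a forest subgraph F₁ of B containing all vertical edges u'u (u ∈ S) such that d_{F₁}(x') ≥ f(x')+1 for every x' ∈ S'. -/

import Mathlib

open SimpleGraph Walk

private lemma myIsAcyclic_mono {V : Type*} {G H : SimpleGraph V} (h : G ≤ H)
    (hH : H.IsAcyclic) : G.IsAcyclic :=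
  fun _ c hc => hH (c.mapLe h) (hc.mapLe h)

private lemma myIsAcyclic_sup_edge {V : Type*} {G : SimpleGraph V} (hG : G.IsAcyclic)
    {x y : V} (hr : ¬ G.Reachable x y) : (G ⊔ SimpleGraph.edge x y).IsAcyclic := by
  have hxy : x ≠ y := fun h => hr (h ▸ Reachable.refl x)
  intro u c hc
  by_cases he : s(x, y) ∈ c.edges
  · have h2 := (adj_and_reachable_delete_edges_iff_exists_cycle
      (G := G ⊔ SimpleGraph.edge x y) (v := x) (w := y)).2 ⟨u, c, hc, he⟩
    refine hr (h2.2.mono ?_)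
    intro v w hvw
    simp only [deleteEdges_adj, sup_adj, edge_adj, Set.mem_singleton_iff] at hvw
    obtain ⟨h1 | h1, h2⟩ := hvw
    · exact h1
    · exact absurd (by rcases h1.1 with ⟨rfl, rfl⟩ | ⟨rfl, rfl⟩ <;> simp [Sym2.eq_swap]) h2
  · have hsub : ∀ e ∈ c.edges, e ∈ G.edgeSet := by
      intro e hec
      have := c.edges_subset_edgeSet hec
      rw [edgeSet_sup] at this
      rcases this with h | h
      · exact h
      · exfalso
        rw [edge_edgeSet_of_ne hxy] at h
        exact he (h ▸ hec)
    exact hG (c.transfer G hsub) (hc.transfer hsub)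

private lemma myNot_reachable_deleteEdges {V : Type*} {G : SimpleGraph V} (hG : G.IsAcyclic)
    {x y : V} (p : G.Walk x y) (hp : p.IsPath) {e : Sym2 V} (he : e ∈ p.edges) :
    ¬ (G.deleteEdges {e}).Reachable x y := by
  classical
  rintro ⟨q⟩
  have hle : G.deleteEdges {e} ≤ G := deleteEdges_le _
  have hsub : ∀ e' ∈ (q.toPath : (G.deleteEdges {e}).Walk x y).edges, e' ∈ G.edgeSet :=
    fun e' he' => edgeSet_subset_edgeSet.2 hle
      ((q.toPath : (G.deleteEdges {e}).Walk x y).edges_subset_edgeSet he')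
  set q' : G.Walk x y := (q.toPath : (G.deleteEdges {e}).Walk x y).transfer G hsub with hq'
  have hq'path : q'.IsPath := (q.toPath.2).transfer hsub
  have heq : p = q' := Subtype.ext_iff.mp (hG.path_unique ⟨p, hp⟩ ⟨q', hq'path⟩)
  rw [heq, hq', edges_transfer] at he
  have := (q.toPath : (G.deleteEdges {e}).Walk x y).edges_subset_edgeSet he
  induction e with
  | h a b =>
    rw [SimpleGraph.mem_edgeSet, deleteEdges_adj] at this
    exact this.2 rfl

private lemma myDeleteEdges_loop {V : Type*} (G : SimpleGraph V) (x : V) :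
    G.deleteEdges {s(x, x)} = G := by
  ext v w
  simp only [deleteEdges_adj, Set.mem_singleton_iff, Sym2.eq_iff, and_iff_left_iff_imp]
  rintro h (⟨rfl, rfl⟩ | ⟨rfl, rfl⟩) <;> exact h.ne rfl

private lemma myStep {V : Type*} {B F : SimpleGraph V} (hFB : F ≤ B) (hac : F.IsAcyclic)
    {x y : V} (hxy : B.Adj x y) :
    ∃ z : V, z ≠ y ∧ (z = x ∨ (F.Adj x z ∧ ¬ F.Adj x y)) ∧
      (F.deleteEdges {s(x, z)} ⊔ SimpleGraph.edge x y).IsAcyclic := by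
  classical
  by_cases hadj : F.Adj x y
  · refine ⟨x, hxy.ne, Or.inl rfl, ?_⟩
    rw [myDeleteEdges_loop, sup_edge_of_adj F hadj]
    exact hac
  · by_cases hreach : F.Reachable x y
    · obtain ⟨w0⟩ := hreach
      obtain ⟨p, hp⟩ := w0.toPath
      cases p with
      | nil => exact absurd rfl hxy.ne
      | @cons _ z _ hxz q =>
        refine ⟨z, fun h => hadj (h ▸ hxz), Or.inr ⟨hxz, hadj⟩, ?_⟩
        apply myIsAcyclic_sup_edge (myIsAcyclic_mono (deleteEdges_le _) hac)
        exact myNot_reachable_deleteEdges hac (cons hxz q) hp (by simp)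
    · refine ⟨x, hxy.ne, Or.inl rfl, ?_⟩
      rw [myDeleteEdges_loop]
      exact myIsAcyclic_sup_edge hac hreach

private lemma myAux {α β : Type*} [Fintype α] [Fintype β]
    (B : SimpleGraph (α ⊕ β))
    (hbip : ∀ x y, B.Adj x y → (x.isLeft ∧ y.isRight) ∨ (x.isRight ∧ y.isLeft))
    (ι : β → α)
    (F₀ : SimpleGraph (α ⊕ β)) (hF₀le : F₀ ≤ B) (hF₀ac : F₀.IsAcyclic) :
    ∀ (s : Finset β), (∀ v ∈ s, ∀ w ∈ s, ι v = ι w → v = w) →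
      (∀ u ∈ s, B.Adj (Sum.inl (ι u)) (Sum.inr u)) →
      ∃ F₁ : SimpleGraph (α ⊕ β), F₁ ≤ B ∧ F₁.IsAcyclic ∧
        (∀ u ∈ s, F₁.Adj (Sum.inl (ι u)) (Sum.inr u)) ∧
        ∀ a : α, Nat.card (F₀.neighborSet (Sum.inl a)) ≤ Nat.card (F₁.neighborSet (Sum.inl a)) := by
  classical
  intro s
  induction s using Finset.induction_on with
  | empty => exact fun _ _ => ⟨F₀, hF₀le, hF₀ac, by simp, fun a => le_rfl⟩
  | @insert u s hu ih =>
    intro hinj hvert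
    obtain ⟨F, hFB, hFac, hFvert, hFdeg⟩ :=
      ih (fun v hv w hw => hinj v (Finset.mem_insert_of_mem hv) w (Finset.mem_insert_of_mem hw))
        (fun v hv => hvert v (Finset.mem_insert_of_mem hv))
    set x : α ⊕ β := Sum.inl (ι u) with hx
    set y : α ⊕ β := Sum.inr u with hy
    have hxy : B.Adj x y := hvert u (Finset.mem_insert_self u s)
    obtain ⟨z, hzy, hz, hac'⟩ := myStep hFB hFac hxy
    -- z is either x or a right-vertex
    have hzform : z = x ∨ ∃ w : β, z = Sum.inr w := by
      rcases hz with h | ⟨h, -⟩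
      · exact Or.inl h
      · right
        have := hbip x z (hFB h)
        rcases this with ⟨-, hr⟩ | ⟨hl, -⟩
        · cases z with
          | inl a => simp at hr
          | inr w => exact ⟨w, rfl⟩
        · simp [hx] at hl
    refine ⟨F.deleteEdges {s(x, z)} ⊔ SimpleGraph.edge x y, ?_, hac', ?_, ?_⟩
    · -- ≤ B
      refine sup_le (le_trans (deleteEdges_le _) hFB) ?_
      intro v w hvw
      rw [edge_adj] at hvw
      rcases hvw.1 with ⟨rfl, rfl⟩ | ⟨rfl, rfl⟩
      · exact hxy
      · exact hxy.symm
    · -- vertical edges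
      intro v hv
      rcases Finset.mem_insert.mp hv with rfl | hv
      · exact Or.inr (by rw [edge_adj]; exact ⟨Or.inl ⟨rfl, rfl⟩, by simp [hx, hy]⟩)
      · left
        rw [deleteEdges_adj]
        refine ⟨hFvert v hv, ?_⟩
        simp only [Set.mem_singleton_iff, Sym2.eq_iff]
        rintro (⟨h1, h2⟩ | ⟨h1, h2⟩)
        · rw [hx] at h1
          have : v = u := hinj v (Finset.mem_insert_of_mem hv) u (Finset.mem_insert_self u s)
            (Sum.inl.inj h1)
          exact hu (this ▸ hv)
        · rcases hzform with rfl | ⟨w, rfl⟩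
          · rw [hx] at h2; simp at h2
          · simp at h1
    · -- degree bounds
      intro a
      refine le_trans (hFdeg a) ?_
      rcases hz with rfl | ⟨hxz, hnadj⟩
      · -- no deletion
        rw [myDeleteEdges_loop]
        rw [Nat.card_coe_set_eq, Nat.card_coe_set_eq]
        refine Set.ncard_le_ncard ?_ (Set.toFinite _)
        exact fun c hc => Or.inl hc
      · obtain ⟨w, rfl⟩ : ∃ w : β, z = Sum.inr w := by
          rcases hzform with rfl | h
          · exact absurd hxz (SimpleGraph.irrefl F)
          · exact h
        by_cases ha : Sum.inl a = x
        · -- the modified vertex: degree stays the same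
          rw [Nat.card_coe_set_eq, Nat.card_coe_set_eq]
          have hset : (F.deleteEdges {s(x, Sum.inr w)} ⊔ SimpleGraph.edge x y).neighborSet
              x = (F.neighborSet x \ {Sum.inr w}) ∪ {y} := by
            ext c
            simp only [mem_neighborSet, sup_adj, Set.mem_union, Set.mem_diff,
              Set.mem_singleton_iff]
            constructor
            · rintro (h | h)
              · rw [deleteEdges_adj, Set.mem_singleton_iff] at h
                exact Or.inl ⟨h.1, fun hc => h.2 (by rw [hc])⟩
              · rw [edge_adj] at h
                rcases h.1 with ⟨-, rfl⟩ | ⟨h1, -⟩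
                · exact Or.inr rfl
                · exact absurd h1 (by simp [hx, hy])
            · rintro (⟨h1, h2⟩ | rfl)
              · left
                rw [deleteEdges_adj, Set.mem_singleton_iff]
                refine ⟨h1, ?_⟩
                intro hc
                rw [Sym2.eq_iff] at hc
                rcases hc with ⟨-, h3⟩ | ⟨h3, -⟩
                · exact h2 h3
                · rw [hx] at h3; simp at h3
              · right
                rw [edge_adj]
                exact ⟨Or.inl ⟨rfl, rfl⟩, by simp [hx, hy]⟩
          rw [ha, hset]
          have hwmem : Sum.inr w ∈ F.neighborSet x := hxz
          have hynot : y ∉ F.neighborSet x \ {Sum.inr w} := fun hc => hnadj hc.1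
          rw [Set.union_singleton, Set.ncard_insert_of_notMem hynot (Set.toFinite _),
            Set.ncard_diff_singleton_add_one hwmem (Set.toFinite _)]
        · -- other left vertices only gain
          rw [Nat.card_coe_set_eq, Nat.card_coe_set_eq]
          refine Set.ncard_le_ncard ?_ (Set.toFinite _)
          intro c hc
          left
          rw [deleteEdges_adj]
          refine ⟨hc, ?_⟩
          simp only [Set.mem_singleton_iff, Sym2.eq_iff]
          rintro (⟨h1, -⟩ | ⟨h1, -⟩)
          · exact ha h1
          · simp at h1


/-- Modifying a forest subgraph of a bipartite graph to contain all "vertical"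
edges `u'u` (for `u` in `S ⊆ V`, `u' = ι u ∈ S'`) while keeping the degree
lower bounds `f + 1` on `S'`. -/
theorem forest_contains_vertical_edges
    {α β : Type*} [Fintype α] [Fintype β]
    (B : SimpleGraph (α ⊕ β))
    (hbip : ∀ x y, B.Adj x y → (x.isLeft ∧ y.isRight) ∨ (x.isRight ∧ y.isLeft))
    (f : α → ℤ) (hf : ∀ a, 2 ≤ f a)
    (S : Set β) (ι : β → α) (hι : Set.InjOn ι S)
    (hvert : ∀ u ∈ S, B.Adj (Sum.inl (ι u)) (Sum.inr u))
    (F₀ : SimpleGraph (α ⊕ β)) (hF₀le : F₀ ≤ B) (hF₀ac : F₀.IsAcyclic)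
    (hF₀deg : ∀ a : α, f a + 1 ≤ (Nat.card (F₀.neighborSet (Sum.inl a)) : ℤ)) :
    ∃ F₁ : SimpleGraph (α ⊕ β), F₁ ≤ B ∧ F₁.IsAcyclic ∧
      (∀ u ∈ S, F₁.Adj (Sum.inl (ι u)) (Sum.inr u)) ∧
      ∀ a : α, f a + 1 ≤ (Nat.card (F₁.neighborSet (Sum.inl a)) : ℤ) := by
  classical
  have hS : S.Finite := Set.toFinite S
  obtain ⟨F₁, h1, h2, h3, h4⟩ := myAux B hbip ι F₀ hF₀le hF₀ac hS.toFinset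
    (fun v hv w hw => hι (hS.mem_toFinset.mp hv) (hS.mem_toFinset.mp hw))
    (fun u hu => hvert u (hS.mem_toFinset.mp hu))
  refine ⟨F₁, h1, h2, fun u hu => h3 u (hS.mem_toFinset.mpr hu), fun a => ?_⟩
  exact le_trans (hF₀deg a) (Nat.cast_le.mpr (h4 a))
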